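/- In a symmetric indeterminate moment problem, the coefficients $v_{k,l} := (-1)^l b_0 b_1 \cdots b_{k-1} b_{k,k+2l}$ (where $b_{k,k+2l}$ is the coefficient of $x^k$ in $P_{k+2l}$) satisfy the recurrence $v_{k+1,l} = \frac{b_k}{b_{k+2l}} v_{k,l} + \frac{b_{k+2l-1}}{b_{k+2l}} v_{k+1,l-1}$ for all $k,l \geq 0$. -/

import Mathlib

open Polynomial

/-- for a symmetric moment problem, the coefficients
`v_{k,l} = (-1)^l b_0⋯b_{k-1} b_{k,k+2l}` (where `b_{k,k+2l}` is the coefficient of `x^k`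
in `P_{k+2l}`) satisfy `v_{k+1,l} = (b_k/b_{k+2l}) v_{k,l} + (b_{k+2l-1}/b_{k+2l}) v_{k+1,l-1}`
for all `k, l ≥ 0` (with `v_{k,l} = 0` for `l < 0`). -/
theorem stmt10 (b : ℕ → ℝ) (P : ℕ → Polynomial ℝ) (v : ℕ → ℕ → ℝ)
    (hb : ∀ n, 0 < b n) (hP0 : P 0 = 1)
    (hrec : ∀ n : ℕ, X * P n = C (b n) * P (n + 1) +
      C (if n = 0 then 0 else b (n - 1)) * P (n - 1))
    (hv : ∀ k l : ℕ,
      v k l = (-1) ^ l * (∏ i ∈ Finset.range k, b i) * (P (k + 2 * l)).coeff k) :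
    ∀ k l : ℕ, v (k + 1) l = b k / b (k + 2 * l) * v k l +
      (if l = 0 then 0 else b (k + 2 * l - 1) / b (k + 2 * l) * v (k + 1) (l - 1)) := by
  -- degree bound: coeff m (P n) = 0 for m > n
  have hcoeff : ∀ n m : ℕ, n < m → (P n).coeff m = 0 := by
    intro n
    induction n using Nat.strong_induction_on with
    | _ n ih =>
      match n with
      | 0 =>
        intro m hm
        rw [hP0, Polynomial.coeff_one, if_neg (by omega)]
      | n + 1 =>
        intro m hm
        obtain ⟨m', rfl⟩ : ∃ m', m = m' + 1 := ⟨m - 1, by omega⟩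
        have H := congrArg (fun p => p.coeff (m' + 1)) (hrec n)
        simp only [Polynomial.coeff_X_mul, Polynomial.coeff_add,
          Polynomial.coeff_C_mul] at H
        have h1 : (P n).coeff m' = 0 := ih n (by omega) m' (by omega)
        have h2 : (P (n - 1)).coeff (m' + 1) = 0 := ih (n - 1) (by omega) _ (by omega)
        rw [h1, h2, mul_zero, add_zero] at H
        have := (hb n).ne'
        field_simp at H
        exact (mul_eq_zero.mp H.symm).resolve_left this
  intro k l
  have hbne : ∀ n, b n ≠ 0 := fun n => (hb n).ne'
  cases l with
  | zero =>
    rw [if_pos rfl, add_zero]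
    have H := congrArg (fun p => p.coeff (k + 1)) (hrec k)
    simp only [Polynomial.coeff_X_mul, Polynomial.coeff_add,
      Polynomial.coeff_C_mul] at H
    have h2 : (if k = 0 then (0:ℝ) else b (k-1)) * (P (k - 1)).coeff (k + 1) = 0 := by
      rcases Nat.eq_zero_or_pos k with h | h
      · simp [h]
      · rw [hcoeff (k-1) (k+1) (by omega), mul_zero]
    rw [h2, add_zero] at H
    rw [hv, hv]
    simp only [pow_zero, one_mul, Finset.prod_range_succ,
      (by omega : k + 1 + 2 * 0 = k + 1), (by omega : k + 2 * 0 = k)]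
    rw [div_self (hbne k), H]
    ring
  | succ l' =>
    rw [if_neg (Nat.succ_ne_zero l')]
    have harith : k + 2 * (l' + 1) = k + 2 * l' + 2 := by ring
    have H := congrArg (fun p => p.coeff (k + 1)) (hrec (k + 2 * l' + 2))
    simp only [Polynomial.coeff_X_mul, Polynomial.coeff_add,
      Polynomial.coeff_C_mul, if_neg (by omega : ¬ k + 2 * l' + 2 = 0),
      (by omega : k + 2 * l' + 2 - 1 = k + 2 * l' + 1)] at H
    rw [hv, hv, hv]
    simp only [(by omega : l' + 1 - 1 = l'),
      (by omega : k + 1 + 2 * (l' + 1) = k + 2 * l' + 2 + 1),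
      (by omega : k + 2 * (l' + 1) = k + 2 * l' + 2),
      (by omega : k + 2 * l' + 2 - 1 = k + 2 * l' + 1),
      (by omega : k + 1 + 2 * l' = k + 2 * l' + 1),
      Finset.prod_range_succ]
    have hA : (P (k + 2 * l' + 2 + 1)).coeff (k + 1) =
        ((P (k + 2 * l' + 2)).coeff k
          - b (k + 2 * l' + 1) * (P (k + 2 * l' + 1)).coeff (k + 1)) / b (k + 2 * l' + 2) := by
      rw [eq_div_iff (hbne _)]
      linarith [H]
    rw [hA]
    field_simp
    ring
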